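/- Let $q \ge 1$, let $A \in \mathcal{M}_n(\mathbb{R}[[X]])$ with $A(0)$ invertible, let $G \in \mathbb{R}[[X,Y_1,\dots,Y_n]]^n$, and let $c \in \mathbb{R}[[X]]^n$ with $c(0)=0$. Then there exists a unique $H \in \mathbb{R}[[X]]^n$ with $H(0)=0$ satisfying the formal differential equation $X^{q+1}H'(X) = A(X)H(X) + X^{q+1}G(X,H(X)) + c(X)$. -/

import Mathlib

open Classical in
/-- Substitution of one-variable power series (with zero constant term) for the
variables of a multivariate power series, landing in `ℝ⟦X⟧`. -/
noncomputable def mvSubstP {σ : Type*} [Fintype σ] (a : σ → PowerSeries ℝ)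
    (F : MvPowerSeries σ ℝ) : PowerSeries ℝ :=
  PowerSeries.mk fun n =>
    ∑ d ∈ Finset.Iic (Finsupp.equivFunOnFinite.symm fun _ : σ => n),
      MvPowerSeries.coeff d F * PowerSeries.coeff n (∏ s, (a s) ^ (d s))

namespace Stmt9

open PowerSeries

lemma agree_mul {N : ℕ} {f g f' g' : PowerSeries ℝ}
    (h : ∀ k ≤ N, coeff k f = coeff k g)
    (h' : ∀ k ≤ N, coeff k f' = coeff k g') :
    ∀ k ≤ N, coeff k (f * f') = coeff k (g * g') := by
  intro k hk
  rw [coeff_mul, coeff_mul]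
  refine Finset.sum_congr rfl fun p hp => ?_
  rw [Finset.HasAntidiagonal.mem_antidiagonal] at hp
  rw [h p.1 (by omega), h' p.2 (by omega)]

lemma agree_pow {N : ℕ} {f g : PowerSeries ℝ}
    (h : ∀ k ≤ N, coeff k f = coeff k g) (d : ℕ) :
    ∀ k ≤ N, coeff k (f ^ d) = coeff k (g ^ d) := by
  induction d with
  | zero => simp
  | succ d ih =>
    rw [pow_succ, pow_succ]
    exact agree_mul ih h

lemma agree_prod {σ : Type*} [Fintype σ] {N : ℕ} {a b : σ → PowerSeries ℝ}
    (h : ∀ s, ∀ k ≤ N, coeff k (a s) = coeff k (b s)) (d : σ → ℕ) :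
    ∀ k ≤ N, coeff k (∏ s, a s ^ d s) = coeff k (∏ s, b s ^ d s) := by
  classical
  induction (Finset.univ : Finset σ) using Finset.induction_on with
  | empty => simp
  | insert _ _ hs ih =>
    rw [Finset.prod_insert hs, Finset.prod_insert hs]
    exact agree_mul (agree_pow (h _) _) ih

lemma coeff_mul_eq_of_lowvanish {m : ℕ} {f D : PowerSeries ℝ}
    (hD : ∀ k < m, coeff k D = 0) :
    coeff m (f * D) = constantCoeff f * coeff m D := by
  rw [coeff_mul]
  rw [Finset.sum_eq_single (0, m)]
  · simp [coeff_zero_eq_constantCoeff]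
  · intro p hp hne
    rw [Finset.HasAntidiagonal.mem_antidiagonal] at hp
    have h2 : p.2 < m := by
      rcases lt_or_eq_of_le (show p.2 ≤ m by omega) with h | h
      · exact h
      · exfalso; apply hne; rw [Prod.ext_iff]; constructor <;> simp <;> omega
    rw [hD p.2 h2, mul_zero]
  · intro h; exact absurd (Finset.HasAntidiagonal.mem_antidiagonal.mpr (by simp)) h

variable (q n : ℕ) (A : Matrix (Fin n) (Fin n) (PowerSeries ℝ))
  (G : Fin n → MvPowerSeries (Unit ⊕ Fin n) ℝ) (c : Fin n → PowerSeries ℝ)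

/-- constant term matrix -/
noncomputable def A0 : Matrix (Fin n) (Fin n) ℝ := A.map (constantCoeff (R := ℝ))

/-- the defect of the equation at coefficient m, for candidate K -/
noncomputable def Phi (K : Fin n → PowerSeries ℝ) (m : ℕ) (i : Fin n) : ℝ :=
  coeff m (X ^ (q + 1) * derivativeFun (K i))
    - ∑ j, coeff m (A i j * K j)
    - coeff m (X ^ (q + 1) * mvSubstP (Sum.elim (fun _ => X) K) (G i))
    - coeff m (c i)

/-- Key comparison: if K and L agree strictly below m, the defects differ only through
the `A0`-image of the m-th coefficients. Needs `1 ≤ q`. -/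
lemma Phi_compare (hq : 1 ≤ q) (K L : Fin n → PowerSeries ℝ) (m : ℕ)
    (hKL : ∀ j, ∀ k < m, coeff k (K j) = coeff k (L j)) (i : Fin n) :
    Phi q n A G c K m i
      = Phi q n A G c L m i
        - (A0 n A).mulVec (fun j => coeff m (K j) - coeff m (L j)) i := by
  have hder : coeff m (X ^ (q + 1) * derivativeFun (K i))
      = coeff m (X ^ (q + 1) * derivativeFun (L i)) := by
    rw [coeff_X_pow_mul', coeff_X_pow_mul']
    split_ifs with h
    · rw [show (K i).derivativeFun = derivative ℝ (K i) from rfl,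
        show (L i).derivativeFun = derivative ℝ (L i) from rfl,
        coeff_derivative, coeff_derivative, hKL i (m - (q+1) + 1) (by omega)]
    · rfl
  have hsub : coeff m (X ^ (q + 1) * mvSubstP (Sum.elim (fun _ => X) K) (G i))
      = coeff m (X ^ (q + 1) * mvSubstP (Sum.elim (fun _ => X) L) (G i)) := by
    rw [coeff_X_pow_mul', coeff_X_pow_mul']
    split_ifs with h
    · unfold mvSubstP
      rw [coeff_mk, coeff_mk]
      refine Finset.sum_congr rfl fun d _ => ?_
      congr 1
      refine agree_prod (N := m - (q+1)) ?_ _ _ le_rfl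
      rintro (u | j) k hk
      · rfl
      · exact hKL j k (by omega)
    · rfl
  have hA : ∀ j, coeff m (A i j * K j)
      = coeff m (A i j * L j) + A0 n A i j * (coeff m (K j) - coeff m (L j)) := by
    intro j
    have : coeff m (A i j * K j) - coeff m (A i j * L j)
        = coeff m (A i j * (K j - L j)) := by
      rw [mul_sub, map_sub]
    have h2 := coeff_mul_eq_of_lowvanish (m := m) (f := A i j) (D := K j - L j)
      (fun k hk => by rw [map_sub, hKL j k hk, sub_self])
    rw [map_sub] at h2
    unfold A0
    simp only [Matrix.map_apply]
    linarith [this, h2]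
  unfold Phi
  rw [hder, hsub, Matrix.mulVec]
  simp only [dotProduct]
  rw [Finset.sum_congr rfl fun j _ => hA j, Finset.sum_add_distrib]
  ring

/-- recursively defined coefficients of the solution -/
noncomputable def hcoef : ℕ → Fin n → ℝ
  | m =>
    (A0 n A)⁻¹.mulVec
      (Phi q n A G c
        (fun j => PowerSeries.mk fun k => if h : k < m then hcoef k j else 0) m)
  termination_by m => m

/-- the truncated series used at stage m -/
noncomputable def Hprev (m : ℕ) (j : Fin n) : PowerSeries ℝ :=
  PowerSeries.mk fun k => if k < m then hcoef q n A G c k j else 0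

lemma hcoef_eq (m : ℕ) :
    hcoef q n A G c m
      = (A0 n A)⁻¹.mulVec (Phi q n A G c (Hprev q n A G c m) m) := by
  rw [hcoef]
  rfl

/-- the full solution -/
noncomputable def Hfull (j : Fin n) : PowerSeries ℝ :=
  PowerSeries.mk fun m => hcoef q n A G c m j

lemma Hfull_agree (m : ℕ) (j : Fin n) :
    ∀ k < m, coeff k (Hfull q n A G c j) = coeff k (Hprev q n A G c m j) := by
  intro k hk
  unfold Hfull Hprev
  rw [coeff_mk, coeff_mk, if_pos hk]

lemma mulVec_cancel (hA : (A.map (PowerSeries.constantCoeff (R := ℝ))).det ≠ 0)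
    (v : Fin n → ℝ) : (A0 n A).mulVec ((A0 n A)⁻¹.mulVec v) = v := by
  have hu : IsUnit (A0 n A).det := isUnit_iff_ne_zero.mpr hA
  rw [Matrix.mulVec_mulVec, Matrix.mul_nonsing_inv _ hu, Matrix.one_mulVec]

lemma mulVec_inj (hA : (A.map (PowerSeries.constantCoeff (R := ℝ))).det ≠ 0)
    {v : Fin n → ℝ} (h : (A0 n A).mulVec v = 0) : v = 0 := by
  have hu : IsUnit (A0 n A).det := isUnit_iff_ne_zero.mpr hA
  have := congrArg ((A0 n A)⁻¹.mulVec) h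
  rwa [Matrix.mulVec_mulVec, Matrix.nonsing_inv_mul _ hu, Matrix.one_mulVec,
    Matrix.mulVec_zero] at this

lemma Phi_Hfull_zero (hq : 1 ≤ q)
    (hA : (A.map (PowerSeries.constantCoeff (R := ℝ))).det ≠ 0) (m : ℕ) (i : Fin n) :
    Phi q n A G c (Hfull q n A G c) m i = 0 := by
  rw [Phi_compare q n A G c hq _ (Hprev q n A G c m) m
    (fun j k hk => Hfull_agree q n A G c m j k hk) i]
  have hvec : (fun j => coeff m (Hfull q n A G c j) - coeff m (Hprev q n A G c m j))
      = hcoef q n A G c m := by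
    funext j
    unfold Hfull Hprev
    rw [coeff_mk, coeff_mk, if_neg (lt_irrefl m), sub_zero]
  rw [hvec, hcoef_eq, mulVec_cancel n A hA, sub_self]

/-- `Phi = 0` iff the coefficient-m equation holds -/
lemma Phi_eq_zero_iff (K : Fin n → PowerSeries ℝ) (i : Fin n)
    (hK : X ^ (q + 1) * derivativeFun (K i)
        = (∑ j, A i j * K j)
          + X ^ (q + 1) * mvSubstP (Sum.elim (fun _ => X) K) (G i) + c i)
    (m : ℕ) : Phi q n A G c K m i = 0 := by
  unfold Phi
  have := congrArg (coeff m) hK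
  rw [map_add, map_add, map_sum] at this
  linarith

lemma Hprev_zero (j : Fin n) : Hprev q n A G c 0 j = 0 := by
  ext k
  unfold Hprev
  rw [coeff_mk, if_neg (Nat.not_lt_zero k), map_zero]

lemma hcoef_zero (hc : ∀ i, PowerSeries.constantCoeff (c i) = 0) :
    hcoef q n A G c 0 = 0 := by
  rw [hcoef_eq]
  have : Phi q n A G c (Hprev q n A G c 0) 0 = 0 := by
    funext i
    unfold Phi
    rw [coeff_X_pow_mul', if_neg (by omega), coeff_X_pow_mul', if_neg (by omega)]
    have hz : ∀ j, coeff 0 (A i j * Hprev q n A G c 0 j) = 0 := by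
      intro j
      rw [Hprev_zero, mul_zero, map_zero]
    rw [Finset.sum_eq_zero fun j _ => hz j, coeff_zero_eq_constantCoeff, hc i]
    simp
  rw [this, Matrix.mulVec_zero]

end Stmt9

/-- existence and uniqueness of a formal solution with zero constant term
of the formal ODE `X^{q+1} H' = A H + X^{q+1} G(X,H) + c`. -/
theorem stmt9 (q : ℕ) (hq : 1 ≤ q) (n : ℕ)
    (A : Matrix (Fin n) (Fin n) (PowerSeries ℝ))
    (hA : (A.map (PowerSeries.constantCoeff (R := ℝ))).det ≠ 0)
    (G : Fin n → MvPowerSeries (Unit ⊕ Fin n) ℝ)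
    (c : Fin n → PowerSeries ℝ) (hc : ∀ i, PowerSeries.constantCoeff (c i) = 0) :
    ∃! H : Fin n → PowerSeries ℝ,
      (∀ i, PowerSeries.constantCoeff (H i) = 0) ∧
      ∀ i, (PowerSeries.X : PowerSeries ℝ) ^ (q + 1) * PowerSeries.derivativeFun (H i)
        = (∑ j, A i j * H j)
          + PowerSeries.X ^ (q + 1) *
              mvSubstP (Sum.elim (fun _ => PowerSeries.X) H) (G i)
          + c i := by
  open PowerSeries Stmt9 in
  refine ⟨Hfull q n A G c, ⟨?_, ?_⟩, ?_⟩
  · intro i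
    have : PowerSeries.constantCoeff (Hfull q n A G c i)
        = hcoef q n A G c 0 i := by
      rw [← coeff_zero_eq_constantCoeff_apply]
      unfold Hfull
      rw [coeff_mk]
    rw [this, hcoef_zero q n A G c hc]
    rfl
  · intro i
    ext m
    have h0 := Phi_Hfull_zero q n A G c hq hA m i
    unfold Phi at h0
    rw [map_add, map_add, map_sum]
    linarith
  · rintro K ⟨-, hKeq⟩
    have hPhiK : ∀ m i, Phi q n A G c K m i = 0 :=
      fun m i => Phi_eq_zero_iff q n A G c K i (hKeq i) m
    have main : ∀ m, ∀ j, coeff m (K j) = coeff m (Hfull q n A G c j) := by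
      intro m
      induction m using Nat.strong_induction_on with
      | _ m ih =>
        have hcomp : ∀ i, Phi q n A G c K m i
            = Phi q n A G c (Hfull q n A G c) m i
              - (A0 n A).mulVec
                  (fun j => coeff m (K j) - coeff m (Hfull q n A G c j)) i :=
          Phi_compare q n A G c hq K (Hfull q n A G c) m (fun j k hk => ih k hk j)
        have hz : (A0 n A).mulVec
            (fun j => coeff m (K j) - coeff m (Hfull q n A G c j)) = 0 := by
          funext i
          have := hcomp i
          rw [hPhiK m i, Phi_Hfull_zero q n A G c hq hA m i] at this
          simpa using this.symm
        have := mulVec_inj n A hA hz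
        intro j
        have hj := congrFun this j
        simp only [Pi.zero_apply] at hj
        linarith
    funext j
    ext m
    exact main m j
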